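/- Define Ei(x) = ∫_{x}^{∞} e^{−v}/v dv for x > 0, and for integers 1 ≤ b ≤ k let H(b,k) = Σ_{j=b+1}^{k} 1/j (with H(k,k) = 0). Then lim_{k→∞} Σ_{b=1}^{k} (1/b + Σ_{j=b+1}^{k} 1/j²) / (1 + H(b,k))² = 1 + e·Ei(1). -/

import Mathlib

open Finset Filter Real

/-- The exponential integral `Ei(x) = ∫_{x}^{∞} e^{−v}/v dv` (for `x > 0`). -/
noncomputable def Ei (x : ℝ) : ℝ := ∫ v in Set.Ioi x, Real.exp (-v) / v

/-- The tail harmonic sum `H(b,k) = ∑_{j=b+1}^{k} 1/j`, with `H(k,k) = 0`. -/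
noncomputable def Htail (b k : ℕ) : ℝ := ∑ j ∈ Finset.Icc (b + 1) k, (1 : ℝ) / (j : ℝ)

open MeasureTheory

noncomputable def Dd (b k : ℕ) : ℝ := 1 + Htail b k
lemma Htail_nonneg (b k : ℕ) : 0 ≤ Htail b k :=
  Finset.sum_nonneg fun j _ => by positivity

lemma Dd_one_le (b k : ℕ) : 1 ≤ Dd b k := le_add_of_nonneg_right (Htail_nonneg b k)
lemma Dd_pos (b k : ℕ) : 0 < Dd b k := lt_of_lt_of_le one_pos (Dd_one_le b k)

lemma Htail_pred {b k : ℕ} (hb : 1 ≤ b) (hk : b ≤ k) :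
    Htail (b-1) k = 1/(b:ℝ) + Htail b k := by
  simp only [Htail]
  have h1 : (b-1) + 1 = b := by omega
  rw [h1]
  have : Icc b k = insert b (Icc (b+1) k) := by
    ext x; simp [Finset.mem_Icc, Finset.mem_insert]; omega
  rw [this, Finset.sum_insert (by simp [Finset.mem_Icc])]

lemma Dd_pred {b k : ℕ} (hb : 1 ≤ b) (hk : b ≤ k) :
    Dd (b-1) k = Dd b k + 1/(b:ℝ) := by
  simp only [Dd, Htail_pred hb hk]; ring

lemma Htail_anti {b b' k : ℕ} (h : b ≤ b') : Htail b' k ≤ Htail b k :=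
  Finset.sum_le_sum_of_subset_of_nonneg
    (Finset.Icc_subset_Icc (by omega) le_rfl) (fun j _ _ => by positivity)

lemma Htail_split {N k : ℕ} (h : N ≤ k) : Htail 0 k = Htail 0 N + Htail N k := by
  simp only [Htail, Nat.zero_add]
  have : Icc 1 k = Icc 1 N ∪ Icc (N+1) k := by
    ext x; simp [Finset.mem_Icc, Finset.mem_union]; omega
  rw [this, Finset.sum_union]
  rw [Finset.disjoint_left]; intro a ha hb; simp [Finset.mem_Icc] at ha hb; omega

lemma tendsto_Htail_zero : Tendsto (fun k => Htail 0 k) atTop atTop := by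
  have h := tendsto_sum_range_one_div_nat_succ_atTop
  have : ∀ k, Htail 0 k = ∑ i ∈ range k, 1 / ((i:ℝ) + 1) := by
    intro k
    simp only [Htail, Nat.zero_add]
    rw [← Finset.Ico_add_one_right_eq_Icc, Finset.sum_Ico_eq_sum_range]
    simp [add_comm]
  simpa [this] using h

lemma tendsto_Htail_atTop (N : ℕ) : Tendsto (fun k => Htail N k) atTop atTop := by
  apply tendsto_atTop_mono' _ (_ : ∀ᶠ k in atTop, Htail 0 k - Htail 0 N ≤ Htail N k)
  · simpa [sub_eq_add_neg] using tendsto_Htail_zero.atTop_add tendsto_const_nhds (C := -(Htail 0 N))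
  · filter_upwards [eventually_ge_atTop N] with k hk
    rw [Htail_split hk]; ring_nf; exact le_refl _

lemma tendsto_Dd_inv (N : ℕ) : Tendsto (fun k => (Dd N k)⁻¹) atTop (nhds 0) := by
  apply Tendsto.inv_tendsto_atTop
  exact tendsto_atTop_add_const_left atTop 1 (tendsto_Htail_atTop N)

lemma Htail_succ_top {b k : ℕ} (h : b ≤ k) :
    Htail b (k+1) = Htail b k + 1/((k:ℝ)+1) := by
  simp only [Htail]
  rw [Finset.sum_Icc_succ_top (by omega)]
  norm_num

lemma log_ratio_lb {x : ℝ} (hx : 0 < x) : 1/(x+1) ≤ Real.log (x+1) - Real.log x := by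
  have h1 : Real.log (x/(x+1)) ≤ x/(x+1) - 1 := Real.log_le_sub_one_of_pos (by positivity)
  rw [Real.log_div (ne_of_gt hx) (by positivity)] at h1
  have : x/(x+1) - 1 = -(1/(x+1)) := by field_simp; ring
  linarith [this ▸ h1]

lemma log_ratio_ub {x : ℝ} (hx : 0 < x) : Real.log (x+1) - Real.log x ≤ 1/x := by
  have h1 : Real.log ((x+1)/x) ≤ (x+1)/x - 1 := Real.log_le_sub_one_of_pos (by positivity)
  rw [Real.log_div (by positivity) (ne_of_gt hx)] at h1
  have : (x+1)/x - 1 = 1/x := by field_simp; ring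
  linarith [this ▸ h1]

lemma Htail_le_log {b k : ℕ} (hb : 1 ≤ b) (hk : b ≤ k) :
    Htail b k ≤ Real.log k - Real.log b := by
  induction k with
  | zero => simp [Htail]; omega
  | succ k ih =>
    rcases Nat.lt_or_ge b (k+1) with h | h
    · have hbk : b ≤ k := by omega
      rw [Htail_succ_top hbk]
      have hk0 : (0:ℝ) < k := by exact_mod_cast Nat.lt_of_lt_of_le (by omega : 0 < b) hbk
      have h1 := log_ratio_lb hk0
      have := ih hbk
      push_cast
      linarith
    · have : b = k+1 := by omega
      subst this; simp [Htail]

lemma log_le_Htail {b k : ℕ} (hb : 1 ≤ b) (hk : b ≤ k) :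
    Real.log (k+1) - Real.log (b+1) ≤ Htail b k := by
  induction k with
  | zero => simp [Htail]; omega
  | succ k ih =>
    rcases Nat.lt_or_ge b (k+1) with h | h
    · have hbk : b ≤ k := by omega
      rw [Htail_succ_top hbk]
      have hk0 : (0:ℝ) < (k:ℝ)+1 := by positivity
      have h1 := log_ratio_ub hk0
      have := ih hbk
      push_cast
      push_cast at this h1
      linarith
    · have : b = k+1 := by omega
      subst this; simp [Htail]


noncomputable def Ff (t : ℝ) : ℝ := ((1 - Real.log t)⁻¹)^2

lemma Ff_nonneg (t : ℝ) : 0 ≤ Ff t := sq_nonneg _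

lemma one_le_one_sub_log {t : ℝ} (h0 : 0 < t) (h : t ≤ 1) : 1 ≤ 1 - Real.log t := by
  nlinarith [Real.log_nonpos (le_of_lt h0) h]

lemma Ff_le_one {t : ℝ} (h0 : 0 < t) (h : t ≤ 1) : Ff t ≤ 1 := by
  have h1 := one_le_one_sub_log h0 h
  have h2 : (1 - Real.log t)⁻¹ ≤ 1 := by
    rw [inv_le_one_iff₀]; right; linarith
  have h3 : 0 ≤ (1 - Real.log t)⁻¹ := inv_nonneg.mpr (by linarith)
  unfold Ff; nlinarith

lemma Ff_mono {s t : ℝ} (hs : 0 < s) (hst : s ≤ t) (ht : t ≤ 1) : Ff s ≤ Ff t := by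
  have h1 : 1 ≤ 1 - Real.log t := one_le_one_sub_log (lt_of_lt_of_le hs hst) ht
  have h2 : 1 - Real.log t ≤ 1 - Real.log s := by
    have := Real.log_le_log hs hst
    linarith
  have h3 : (1 - Real.log s)⁻¹ ≤ (1 - Real.log t)⁻¹ := inv_anti₀ (by linarith) h2
  have h4 : 0 ≤ (1 - Real.log s)⁻¹ := inv_nonneg.mpr (by linarith)
  unfold Ff; nlinarith

lemma Ff_measurable : Measurable Ff :=
  ((measurable_const.sub Real.measurable_log).inv.pow_const 2)

lemma Ff_integrableOn : IntegrableOn Ff (Set.Ioc (0:ℝ) 1) := by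
  apply Measure.integrableOn_of_bounded (M := 1)
  · simp
  · exact Ff_measurable.aestronglyMeasurable
  · filter_upwards [ae_restrict_mem measurableSet_Ioc] with t ht
    rw [Real.norm_eq_abs, abs_of_nonneg (Ff_nonneg t)]
    exact Ff_le_one ht.1 ht.2

noncomputable def cc : ℝ := ∫ t in Set.Ioc (0:ℝ) 1, Ff t

lemma Ff_intervalIntegrable {a b : ℝ} (ha : 0 ≤ a) (hab : a ≤ b) (hb : b ≤ 1) :
    IntervalIntegrable Ff volume a b := by
  rw [intervalIntegrable_iff_integrableOn_Ioc_of_le hab]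
  exact Ff_integrableOn.mono_set (Set.Ioc_subset_Ioc ha hb)


lemma piece_le {n : ℕ} (hn : 1 ≤ n) {i : ℕ} (hi : i < n) :
    ∫ t in ((i:ℝ)/n)..(((i:ℝ)+1)/n), Ff t ≤ (1/(n:ℝ)) * Ff (((i:ℝ)+1)/n) := by
  have hn0 : (0:ℝ) < n := by exact_mod_cast hn
  have hle : (i:ℝ)/n ≤ ((i:ℝ)+1)/n := by gcongr; linarith
  have hi1 : ((i:ℝ)+1)/n ≤ 1 := by
    rw [div_le_one hn0]
    have : (i:ℝ)+1 ≤ n := by exact_mod_cast hi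
    linarith
  have h0 : (0:ℝ) ≤ (i:ℝ)/n := by positivity
  rw [intervalIntegral.integral_of_le hle]
  have hvol : volume (Set.Ioc ((i:ℝ)/n) (((i:ℝ)+1)/n)) = ENNReal.ofReal (1/(n:ℝ)) := by
    rw [Real.volume_Ioc]
    congr 1
    field_simp; ring
  calc ∫ t in Set.Ioc ((i:ℝ)/n) (((i:ℝ)+1)/n), Ff t
      ≤ ∫ _ in Set.Ioc ((i:ℝ)/n) (((i:ℝ)+1)/n), Ff (((i:ℝ)+1)/n) := by
        apply setIntegral_mono_on
          (Ff_integrableOn.mono_set (Set.Ioc_subset_Ioc h0 hi1))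
          (integrableOn_const (by rw [hvol]; exact ENNReal.ofReal_ne_top))
          measurableSet_Ioc
        intro t ht
        exact Ff_mono (lt_of_le_of_lt h0 ht.1) ht.2 hi1
    _ = (1/(n:ℝ)) * Ff (((i:ℝ)+1)/n) := by
        rw [setIntegral_const, measureReal_def, hvol, ENNReal.toReal_ofReal (by positivity), smul_eq_mul]

lemma piece_ge {n : ℕ} (hn : 1 ≤ n) {i : ℕ} (hi0 : 1 ≤ i) (hi : i < n) :
    (1/(n:ℝ)) * Ff ((i:ℝ)/n) ≤ ∫ t in ((i:ℝ)/n)..(((i:ℝ)+1)/n), Ff t := by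
  have hn0 : (0:ℝ) < n := by exact_mod_cast hn
  have hle : (i:ℝ)/n ≤ ((i:ℝ)+1)/n := by gcongr; linarith
  have hi1 : ((i:ℝ)+1)/n ≤ 1 := by
    rw [div_le_one hn0]
    have : (i:ℝ)+1 ≤ n := by exact_mod_cast hi
    linarith
  have h0 : (0:ℝ) < (i:ℝ)/n := by
    apply div_pos _ hn0
    exact_mod_cast hi0
  rw [intervalIntegral.integral_of_le hle]
  have hvol : volume (Set.Ioc ((i:ℝ)/n) (((i:ℝ)+1)/n)) = ENNReal.ofReal (1/(n:ℝ)) := by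
    rw [Real.volume_Ioc]; congr 1; field_simp; ring
  calc (1/(n:ℝ)) * Ff ((i:ℝ)/n)
      = ∫ _ in Set.Ioc ((i:ℝ)/n) (((i:ℝ)+1)/n), Ff ((i:ℝ)/n) := by
        rw [setIntegral_const, measureReal_def, hvol, ENNReal.toReal_ofReal (by positivity), smul_eq_mul]
    _ ≤ ∫ t in Set.Ioc ((i:ℝ)/n) (((i:ℝ)+1)/n), Ff t := by
        apply setIntegral_mono_on
          (integrableOn_const (by rw [hvol]; exact ENNReal.ofReal_ne_top))
          (Ff_integrableOn.mono_set (Set.Ioc_subset_Ioc (le_of_lt h0) hi1))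
          measurableSet_Ioc
        intro t ht
        exact Ff_mono h0 (le_of_lt ht.1) (le_trans ht.2 hi1)

lemma mydiv {a b c : ℝ} (h : a ≤ b) (hc : 0 ≤ c) : a / c ≤ b / c := by
  rw [div_eq_mul_inv, div_eq_mul_inv]
  exact mul_le_mul_of_nonneg_right h (inv_nonneg.mpr hc)

lemma riemann_sum_eq {n : ℕ} (hn : 1 ≤ n) :
    ∑ i ∈ range n, ∫ t in ((i:ℝ)/n)..(((i:ℝ)+1)/n), Ff t = cc := by
  have hn0 : (0:ℝ) < n := by exact_mod_cast hn
  have h := intervalIntegral.sum_integral_adjacent_intervals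
    (a := fun i => (i:ℝ)/n) (n := n) (f := Ff) (μ := volume) ?_
  · have h0 : ((0:ℕ):ℝ)/n = 0 := by simp
    have h1 : ((n:ℕ):ℝ)/n = 1 := by field_simp
    rw [h0, h1] at h
    rw [show cc = ∫ t in (0:ℝ)..1, Ff t from
      (intervalIntegral.integral_of_le zero_le_one).symm] at *
    rw [← h]
    apply Finset.sum_congr rfl
    intro i _
    push_cast
    rfl
  · intro i hi
    apply Ff_intervalIntegrable (by positivity) (mydiv (by push_cast; linarith) (by positivity)) ?_
    · rw [div_le_one hn0]
      have : (i:ℝ)+1 ≤ n := by exact_mod_cast hi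
      push_cast
      linarith
    
lemma riemann_lb {n : ℕ} (hn : 1 ≤ n) :
    cc ≤ (1/(n:ℝ)) * ∑ j ∈ Icc 1 n, Ff ((j:ℝ)/n) := by
  have hre : ∑ j ∈ Icc 1 n, Ff ((j:ℝ)/n) = ∑ i ∈ range n, Ff (((i:ℝ)+1)/n) := by
    rw [← Finset.Ico_add_one_right_eq_Icc, Finset.sum_Ico_eq_sum_range]
    apply Finset.sum_congr (by norm_num)
    intro i _; push_cast; ring_nf
  rw [hre, Finset.mul_sum, ← riemann_sum_eq hn]
  apply Finset.sum_le_sum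
  intro i hi
  exact piece_le hn (Finset.mem_range.mp hi)

lemma riemann_ub {n : ℕ} (hn : 1 ≤ n) :
    (1/(n:ℝ)) * ∑ j ∈ Icc 1 n, Ff ((j:ℝ)/n) ≤ cc + 1/n := by
  have hn0 : (0:ℝ) < n := by exact_mod_cast hn
  obtain ⟨m, rfl⟩ : ∃ m, n = m + 1 := ⟨n-1, by omega⟩
  have hre : ∑ j ∈ Icc 1 (m+1), Ff ((j:ℝ)/(m+1:ℕ)) = ∑ i ∈ range (m+1), Ff (((i:ℝ)+1)/(m+1:ℕ)) := by
    rw [← Finset.Ico_add_one_right_eq_Icc, Finset.sum_Ico_eq_sum_range]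
    apply Finset.sum_congr (by norm_num)
    intro i _; push_cast; ring_nf
  rw [hre, Finset.sum_range_succ, mul_add]
  have hlast : (1/((m+1:ℕ):ℝ)) * Ff (((m:ℝ)+1)/(m+1:ℕ)) = 1/((m+1:ℕ):ℝ) := by
    have : ((m:ℝ)+1)/((m+1:ℕ):ℝ) = 1 := by push_cast; field_simp
    rw [this]
    simp [Ff]
  rw [hlast]
  have hmain : (1/((m+1:ℕ):ℝ)) * ∑ i ∈ range m, Ff (((i:ℝ)+1)/(m+1:ℕ)) ≤ cc := by
    rw [Finset.mul_sum]
    have step : ∀ i ∈ range m, (1/((m+1:ℕ):ℝ)) * Ff (((i:ℝ)+1)/(m+1:ℕ))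
        ≤ ∫ t in (((i:ℝ)+1)/(m+1:ℕ))..(((i:ℝ)+2)/(m+1:ℕ)), Ff t := by
      intro i hi
      have him := Finset.mem_range.mp hi
      have h := piece_ge (n := m+1) (i := i+1) (by omega) (by omega) (by omega)
      push_cast at h ⊢
      convert h using 3 <;> ring
    calc ∑ i ∈ range m, (1/((m+1:ℕ):ℝ)) * Ff (((i:ℝ)+1)/(m+1:ℕ))
        ≤ ∑ i ∈ range m, ∫ t in (((i:ℝ)+1)/(m+1:ℕ))..(((i:ℝ)+2)/(m+1:ℕ)), Ff t :=
          Finset.sum_le_sum step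
      _ = ∫ t in ((1:ℝ)/(m+1:ℕ))..(((m:ℝ)+1)/(m+1:ℕ)), Ff t := by
          have h := intervalIntegral.sum_integral_adjacent_intervals
            (a := fun i => ((i:ℝ)+1)/(m+1:ℕ)) (n := m) (f := Ff) (μ := volume) ?_
          · rw [show (1:ℝ)/((m+1:ℕ):ℝ) = (((0:ℕ):ℝ)+1)/((m+1:ℕ):ℝ) by norm_num, ← h]
            exact Finset.sum_congr rfl fun i _ => by
              congr 1 <;> first | rfl | (push_cast; ring)
          · intro i hi
            apply Ff_intervalIntegrable (by positivity) (mydiv (by push_cast; linarith) (by positivity)) ?_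
            rw [div_le_one (by positivity)]
            have : (i:ℝ)+1 ≤ m := by exact_mod_cast hi
            push_cast; linarith
      _ ≤ cc := by
          rw [show cc = ∫ t in (0:ℝ)..1, Ff t from
            (intervalIntegral.integral_of_le zero_le_one).symm]
          have hsplit : ∫ t in (0:ℝ)..1, Ff t
              = (∫ t in (0:ℝ)..((1:ℝ)/(m+1:ℕ)), Ff t) + ∫ t in ((1:ℝ)/(m+1:ℕ))..(1:ℝ), Ff t := by
            rw [intervalIntegral.integral_add_adjacent_intervals]
            · exact Ff_intervalIntegrable le_rfl (by positivity) (by rw [div_le_one (by positivity)]; push_cast; linarith)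
            · exact Ff_intervalIntegrable (by positivity) (by rw [div_le_one (by positivity)]; push_cast; linarith) le_rfl
          have hend : ((m:ℝ)+1)/((m+1:ℕ):ℝ) = 1 := by push_cast; field_simp
          rw [hsplit, hend]
          have hpos : 0 ≤ ∫ t in (0:ℝ)..((1:ℝ)/(m+1:ℕ)), Ff t := by
            apply intervalIntegral.integral_nonneg (by positivity)
            intro t _; exact Ff_nonneg t
          linarith
  push_cast at hmain ⊢
  linarith

noncomputable def Gg (t : ℝ) : ℝ := (1 - Real.log t)⁻¹

lemma Gg_cont : ContinuousOn Gg {x : ℝ | 0 < x ∧ x ≤ 1} := by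
  apply ContinuousOn.inv₀
  · exact continuousOn_const.sub (Real.continuousOn_log.mono (fun x hx => ne_of_gt hx.1))
  · intro x hx
    have := Real.log_nonpos (le_of_lt hx.1) hx.2
    intro h
    have : Real.log x = 1 := by linarith [sub_eq_zero.mp h]
    linarith

lemma GF_cont : ContinuousOn (fun t => Gg t + Ff t) {x : ℝ | 0 < x ∧ x ≤ 1} := by
  apply Gg_cont.add
  have : Ff = fun t => (Gg t)^2 := by funext t; simp [Ff, Gg]
  rw [this]
  exact Gg_cont.pow 2

lemma hasDerivAt_Aa {x : ℝ} (hx : 0 < x) (hx1 : x ≤ 1) :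
    HasDerivAt (fun t => t * (1 - Real.log t)⁻¹) (Gg x + Ff x) x := by
  have hlog : Real.log x ≤ 0 := Real.log_nonpos (le_of_lt hx) hx1
  have hne : 1 - Real.log x ≠ 0 := by intro h; linarith [h]
  have h1 : HasDerivAt (fun t : ℝ => 1 - Real.log t) (-x⁻¹) x := by
    simpa using ((Real.hasDerivAt_log (ne_of_gt hx)).const_sub 1)
  have h2 : HasDerivAt (fun t : ℝ => (1 - Real.log t)⁻¹)
      (x⁻¹ / (1 - Real.log x)^2) x := by
    have := h1.inv hne
    refine this.congr_deriv ?_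
    ring
  have h3 := (hasDerivAt_id x).mul h2
  refine h3.congr_deriv ?_
  simp only [Gg, Ff, id]
  field_simp

lemma interval_a (n : ℕ) (hn : 1 ≤ n) :
    ∫ t in (Real.exp (1-(n:ℝ)))..1, (Gg t + Ff t)
      = 1 - Real.exp (1-(n:ℝ)) / n := by
  have hn1 : (1:ℝ) ≤ n := by exact_mod_cast hn
  have ha : Real.exp (1-(n:ℝ)) ≤ 1 := by
    rw [Real.exp_le_one_iff]; linarith
  have ha0 : 0 < Real.exp (1-(n:ℝ)) := Real.exp_pos _
  have huIcc : Set.uIcc (Real.exp (1-(n:ℝ))) 1 = Set.Icc (Real.exp (1-(n:ℝ))) 1 :=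
    Set.uIcc_of_le ha
  have hsub : Set.uIcc (Real.exp (1-(n:ℝ))) 1 ⊆ {x : ℝ | 0 < x ∧ x ≤ 1} := by
    rw [huIcc]; intro x hx; exact ⟨lt_of_lt_of_le ha0 hx.1, hx.2⟩
  rw [intervalIntegral.integral_eq_sub_of_hasDerivAt
    (f := fun t => t * (1 - Real.log t)⁻¹)
    (fun x hx => hasDerivAt_Aa (hsub hx).1 (hsub hx).2)
    ((GF_cont.mono hsub).intervalIntegrable)]
  rw [Real.log_exp]
  simp [Real.log_one]
  ring

lemma interval_b (n : ℕ) (hn : 1 ≤ n) :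
    ∫ t in (Real.exp (1-(n:ℝ)))..1, Gg t
      = Real.exp 1 * ∫ v in (1:ℝ)..(n:ℝ), Real.exp (-v) / v := by
  have hn1 : (1:ℝ) ≤ n := by exact_mod_cast hn
  have key := intervalIntegral.integral_comp_smul_deriv''
    (f := fun v : ℝ => Real.exp (1-v)) (f' := fun v : ℝ => -Real.exp (1-v))
    (g := Gg) (a := (1:ℝ)) (b := (n:ℝ)) ?_ ?_ ?_ ?_
  · have hfa : Real.exp (1-(1:ℝ)) = 1 := by norm_num
    rw [hfa] at key
    rw [intervalIntegral.integral_symm]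
    rw [← key]
    rw [← intervalIntegral.integral_neg, ← intervalIntegral.integral_const_mul]
    apply intervalIntegral.integral_congr
    intro v hv
    rw [Set.uIcc_of_le hn1] at hv
    have hv1 : (1:ℝ) ≤ v := hv.1
    simp only [smul_eq_mul, Function.comp, Gg, Real.log_exp]
    have : (1 : ℝ) - (1 - v) = v := by ring
    rw [this]
    rw [Real.exp_sub, Real.exp_neg]
    field_simp
  · exact (Real.continuous_exp.comp (continuous_const.sub continuous_id)).continuousOn
  · intro x _
    have h : HasDerivAt (fun v : ℝ => Real.exp (1-v)) (-Real.exp (1-x)) x := by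
      have h1 : HasDerivAt (fun v : ℝ => 1-v) (-1 : ℝ) x := by
        simpa using (hasDerivAt_id x).const_sub 1
      exact ((Real.hasDerivAt_exp (1-x)).comp x h1).congr_deriv (by ring)
    exact h.hasDerivWithinAt
  · exact ((Real.continuous_exp.comp (continuous_const.sub continuous_id)).continuousOn).neg
  · apply Gg_cont.mono
    intro y hy
    obtain ⟨x, hx, rfl⟩ := hy
    rw [Set.uIcc_of_le hn1] at hx
    constructor
    · exact Real.exp_pos _
    · rw [Real.exp_le_one_iff]; linarith [hx.1]

lemma Gg_nonneg_on {t : ℝ} (h0 : 0 < t) (h1 : t ≤ 1) : 0 ≤ Gg t := by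
  have := Real.log_nonpos (le_of_lt h0) h1
  exact inv_nonneg.mpr (by linarith)

lemma Gg_le_one_on {t : ℝ} (h0 : 0 < t) (h1 : t ≤ 1) : Gg t ≤ 1 := by
  have := Real.log_nonpos (le_of_lt h0) h1
  rw [Gg, inv_le_one_iff₀]; right; linarith

lemma Gg_measurable : Measurable Gg := (measurable_const.sub Real.measurable_log).inv

lemma Gg_integrableOn : IntegrableOn Gg (Set.Ioc (0:ℝ) 1) := by
  apply Measure.integrableOn_of_bounded (M := 1)
  · simp
  · exact Gg_measurable.aestronglyMeasurable
  · filter_upwards [ae_restrict_mem measurableSet_Ioc] with t ht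
    rw [Real.norm_eq_abs, abs_of_nonneg (Gg_nonneg_on ht.1 ht.2)]
    exact Gg_le_one_on ht.1 ht.2

lemma Ff_measurable' : Measurable Ff := ((measurable_const.sub Real.measurable_log).inv.pow_const 2)

lemma Ff_integrableOn' : IntegrableOn Ff (Set.Ioc (0:ℝ) 1) := by
  apply Measure.integrableOn_of_bounded (M := 1)
  · simp
  · exact Ff_measurable'.aestronglyMeasurable
  · filter_upwards [ae_restrict_mem measurableSet_Ioc] with t ht
    rw [Real.norm_eq_abs, abs_of_nonneg (sq_nonneg _)]
    have h2 : Gg t ≤ 1 := Gg_le_one_on ht.1 ht.2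
    have h3 : 0 ≤ Gg t := Gg_nonneg_on ht.1 ht.2
    show ((1 - Real.log t)⁻¹)^2 ≤ 1
    have : ((1 - Real.log t)⁻¹)^2 = (Gg t)^2 := rfl
    rw [this]; nlinarith

lemma monotone_sets : Monotone (fun n : ℕ => Set.Ioc (Real.exp (1-(n:ℝ))) 1) := by
  intro n m hnm
  apply Set.Ioc_subset_Ioc _ le_rfl
  apply Real.exp_le_exp.mpr
  have : (n:ℝ) ≤ m := by exact_mod_cast hnm
  linarith

lemma union_sets : (⋃ n : ℕ, Set.Ioc (Real.exp (1-(n:ℝ))) 1) = Set.Ioc (0:ℝ) 1 := by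
  ext x
  simp only [Set.mem_iUnion, Set.mem_Ioc]
  constructor
  · rintro ⟨n, hn, hx⟩
    exact ⟨lt_trans (Real.exp_pos _) hn, hx⟩
  · rintro ⟨hx0, hx1⟩
    obtain ⟨n, hn⟩ := exists_nat_gt (1 - Real.log x)
    refine ⟨n, ?_, hx1⟩
    rw [← Real.exp_log hx0]
    apply Real.exp_lt_exp.mpr
    linarith

lemma tendsto_setInt (h : IntegrableOn (fun t => Gg t + Ff t) (Set.Ioc (0:ℝ) 1)) :
    Tendsto (fun n : ℕ => ∫ t in Set.Ioc (Real.exp (1-(n:ℝ))) 1, (Gg t + Ff t)) atTop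
      (nhds (∫ t in Set.Ioc (0:ℝ) 1, (Gg t + Ff t))) := by
  have := MeasureTheory.tendsto_setIntegral_of_monotone
    (s := fun n : ℕ => Set.Ioc (Real.exp (1-(n:ℝ))) 1)
    (fun n => measurableSet_Ioc) monotone_sets (union_sets ▸ h)
  rwa [union_sets] at this

lemma GF_int : IntegrableOn (fun t => Gg t + Ff t) (Set.Ioc (0:ℝ) 1) :=
  Gg_integrableOn.add Ff_integrableOn'

lemma int_GF_eq_one : (∫ t in Set.Ioc (0:ℝ) 1, Gg t) + cc = 1 := by
  have h1 : Tendsto (fun n : ℕ => 1 - Real.exp (1-(n:ℝ)) / n) atTop (nhds 1) := by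
    have h2 : Tendsto (fun n : ℕ => Real.exp (1-(n:ℝ)) * ((n:ℝ))⁻¹) atTop (nhds (0*0)) := by
      apply Tendsto.mul
      · apply Real.tendsto_exp_atBot.comp
        apply tendsto_atBot_add_const_left
        exact (tendsto_neg_atBot_iff.mpr tendsto_natCast_atTop_atTop)
      · exact tendsto_inv_atTop_zero.comp tendsto_natCast_atTop_atTop
    have h2' : Tendsto (fun n : ℕ => Real.exp (1-(n:ℝ)) / n) atTop (nhds 0) := by
      simpa [div_eq_mul_inv] using h2
    simpa using h2'.const_sub 1
  have h2 : ∀ᶠ n : ℕ in atTop, ∫ t in Set.Ioc (Real.exp (1-(n:ℝ))) 1, (Gg t + Ff t)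
      = 1 - Real.exp (1-(n:ℝ)) / n := by
    filter_upwards [eventually_ge_atTop 1] with n hn
    rw [← interval_a n hn, intervalIntegral.integral_of_le]
    rw [Real.exp_le_one_iff]
    have : (1:ℝ) ≤ n := by exact_mod_cast hn
    linarith
  have h3 := tendsto_setInt GF_int
  have h4 : (∫ t in Set.Ioc (0:ℝ) 1, (Gg t + Ff t)) = 1 :=
    tendsto_nhds_unique h3 (Tendsto.congr' (by filter_upwards [h2] with n hn; exact hn.symm) h1)
  rw [MeasureTheory.integral_add Gg_integrableOn Ff_integrableOn'] at h4
  simpa [cc] using h4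

lemma expv_integrableOn : IntegrableOn (fun v => Real.exp (-v) / v) (Set.Ioi (1:ℝ)) := by
  apply Integrable.mono (exp_neg_integrableOn_Ioi 1 one_pos)
  · exact ((Real.measurable_exp.comp measurable_neg).div measurable_id).aestronglyMeasurable
  · filter_upwards [ae_restrict_mem measurableSet_Ioi] with v hv
    have hv1 : (1:ℝ) < v := hv
    rw [Real.norm_eq_abs, Real.norm_eq_abs]
    rw [abs_of_nonneg (by positivity), abs_of_nonneg (by positivity)]
    rw [neg_one_mul]
    calc Real.exp (-v) / v ≤ Real.exp (-v) / 1 := by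
          gcongr
      _ = Real.exp (-v) := by ring
  
lemma int_Gg_eq : (∫ t in Set.Ioc (0:ℝ) 1, Gg t) = Real.exp 1 * Ei 1 := by
  have h1 : Tendsto (fun n : ℕ => Real.exp 1 * ∫ v in (1:ℝ)..(n:ℝ), Real.exp (-v) / v)
      atTop (nhds (Real.exp 1 * Ei 1)) := by
    apply Tendsto.const_mul
    exact intervalIntegral_tendsto_integral_Ioi 1 expv_integrableOn tendsto_natCast_atTop_atTop
  have h2 : ∀ᶠ n : ℕ in atTop, ∫ t in Set.Ioc (Real.exp (1-(n:ℝ))) 1, Gg t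
      = Real.exp 1 * ∫ v in (1:ℝ)..(n:ℝ), Real.exp (-v) / v := by
    filter_upwards [eventually_ge_atTop 1] with n hn
    rw [← interval_b n hn, intervalIntegral.integral_of_le]
    rw [Real.exp_le_one_iff]
    have : (1:ℝ) ≤ n := by exact_mod_cast hn
    linarith
  have h3 : Tendsto (fun n : ℕ => ∫ t in Set.Ioc (Real.exp (1-(n:ℝ))) 1, Gg t) atTop
      (nhds (∫ t in Set.Ioc (0:ℝ) 1, Gg t)) := by
    have := MeasureTheory.tendsto_setIntegral_of_monotone
      (s := fun n : ℕ => Set.Ioc (Real.exp (1-(n:ℝ))) 1)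
      (fun n => measurableSet_Ioc) monotone_sets (union_sets ▸ Gg_integrableOn)
    rwa [union_sets] at this
  exact tendsto_nhds_unique h3 (Tendsto.congr' (by filter_upwards [h2] with n hn; exact hn.symm) h1)

lemma cc_eq : cc = 1 - Real.exp 1 * Ei 1 := by
  have := int_GF_eq_one
  rw [int_Gg_eq] at this
  linarith

noncomputable def Ek (k : ℕ) : ℝ := ∑ b ∈ Icc 1 k, (1/(b:ℝ)^2) / (Dd b k)^2
noncomputable def Pk (k : ℕ) : ℝ := ∑ b ∈ Icc 1 k, (1/(b:ℝ)) / (Dd b k)^2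

lemma Ek_nonneg (k : ℕ) : 0 ≤ Ek k :=
  Finset.sum_nonneg fun b _ => by positivity

lemma sum_inv_sq_le (N : ℕ) (hN : 1 ≤ N) : ∑ b ∈ Icc 1 N, (1/(b:ℝ)^2) ≤ 2 - 1/(N:ℝ) := by
  induction N with
  | zero => omega
  | succ N ih =>
    rcases Nat.lt_or_ge 1 (N+1) with h | h
    · have hN1 : 1 ≤ N := by omega
      have hNr : (1:ℝ) ≤ N := by exact_mod_cast hN1
      rw [Finset.sum_Icc_succ_top (by omega)]
      have h2 : (1/((N:ℝ)+1)^2) ≤ 1/(N:ℝ) - 1/((N:ℝ)+1) := by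
        have hle : (N:ℝ)*((N:ℝ)+1) ≤ ((N:ℝ)+1)^2 := by nlinarith
        calc 1/((N:ℝ)+1)^2 ≤ 1/((N:ℝ)*((N:ℝ)+1)) :=
              one_div_le_one_div_of_le (by positivity) hle
          _ = 1/(N:ℝ) - 1/((N:ℝ)+1) := by
              rw [div_sub_div _ _ (by positivity) (by positivity)]
              congr 1; ring
      have := ih hN1
      push_cast
      push_cast at this
      linarith
    · have : N = 0 := by omega
      subst this; norm_num

lemma tail_inv_sq {N k : ℕ} (hN : 1 ≤ N) (hk : N ≤ k) :
    ∑ b ∈ Icc (N+1) k, (1/(b:ℝ)^2) ≤ 1/(N:ℝ) - 1/(k:ℝ) := by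
  induction k with
  | zero => omega
  | succ k ih =>
    rcases Nat.lt_or_ge N (k+1) with h | h
    · have hNk : N ≤ k := by omega
      have hk1 : 1 ≤ k := by omega
      have hkr : (1:ℝ) ≤ k := by exact_mod_cast hk1
      rw [Finset.sum_Icc_succ_top (by omega)]
      have h2 : (1/((k:ℝ)+1)^2) ≤ 1/(k:ℝ) - 1/((k:ℝ)+1) := by
        have hle : (k:ℝ)*((k:ℝ)+1) ≤ ((k:ℝ)+1)^2 := by nlinarith
        calc 1/((k:ℝ)+1)^2 ≤ 1/((k:ℝ)*((k:ℝ)+1)) :=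
              one_div_le_one_div_of_le (by positivity) hle
          _ = 1/(k:ℝ) - 1/((k:ℝ)+1) := by
              rw [div_sub_div _ _ (by positivity) (by positivity)]
              congr 1; ring
      have := ih hNk
      push_cast
      push_cast at this
      linarith
    · have : N = k+1 := by omega
      subst this
      rw [Finset.Icc_eq_empty (by omega)]
      have h0 : (0:ℝ) < (k:ℝ)+1 := by positivity
      have h0 : (0:ℝ) < (k:ℝ)+1 := by positivity
      have : 1/((k:ℝ)+1) - 1/((k:ℝ)+1) = 0 := by ring
      push_cast
      simp

lemma Ek_bound {N k : ℕ} (hN : 1 ≤ N) (hk : N ≤ k) :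
    Ek k ≤ 2 * ((Dd N k)⁻¹)^2 + 1/(N:ℝ) := by
  have hsplit : Icc 1 k = Icc 1 N ∪ Icc (N+1) k := by
    ext x; simp [Finset.mem_Icc, Finset.mem_union]; omega
  have hdisj : Disjoint (Icc 1 N) (Icc (N+1) k) := by
    rw [Finset.disjoint_left]; intro a ha hb; simp [Finset.mem_Icc] at ha hb; omega
  rw [Ek, hsplit, Finset.sum_union hdisj]
  have h1 : ∑ b ∈ Icc 1 N, (1/(b:ℝ)^2) / (Dd b k)^2 ≤ 2 * ((Dd N k)⁻¹)^2 := by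
    calc ∑ b ∈ Icc 1 N, (1/(b:ℝ)^2) / (Dd b k)^2
        ≤ ∑ b ∈ Icc 1 N, (1/(b:ℝ)^2) * ((Dd N k)⁻¹)^2 := by
          apply Finset.sum_le_sum
          intro b hb
          rw [div_eq_mul_inv, ← inv_pow]
          apply mul_le_mul_of_nonneg_left _ (by positivity)
          have hDb : Dd N k ≤ Dd b k := by
            simp only [Dd]
            have := Htail_anti (k := k) (Finset.mem_Icc.mp hb).2
            linarith
          have h1 := Dd_pos b k
          have h2 := Dd_pos N k
          gcongr
      _ = (∑ b ∈ Icc 1 N, (1/(b:ℝ)^2)) * ((Dd N k)⁻¹)^2 := by rw [Finset.sum_mul]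
      _ ≤ 2 * ((Dd N k)⁻¹)^2 := by
          apply mul_le_mul_of_nonneg_right _ (by positivity)
          have h := sum_inv_sq_le N hN
          have hNr : (0:ℝ) < N := by exact_mod_cast hN
          have h2 : (0:ℝ) < 1/(N:ℝ) := by positivity
          linarith
  have h2 : ∑ b ∈ Icc (N+1) k, (1/(b:ℝ)^2) / (Dd b k)^2 ≤ 1/(N:ℝ) := by
    calc ∑ b ∈ Icc (N+1) k, (1/(b:ℝ)^2) / (Dd b k)^2
        ≤ ∑ b ∈ Icc (N+1) k, (1/(b:ℝ)^2) := by
          apply Finset.sum_le_sum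
          intro b hb
          have h1 := Dd_one_le b k
          calc (1/(b:ℝ)^2) / (Dd b k)^2 ≤ (1/(b:ℝ)^2) / 1^2 := by
                gcongr
            _ = 1/(b:ℝ)^2 := by norm_num
      _ ≤ 1/(N:ℝ) - 1/(k:ℝ) := tail_inv_sq hN hk
      _ ≤ 1/(N:ℝ) := by
          have : (0:ℝ) ≤ 1/(k:ℝ) := by positivity
          linarith
  linarith

lemma tendsto_Ek : Tendsto Ek atTop (nhds 0) := by
  rw [Metric.tendsto_atTop]
  intro ε hε
  obtain ⟨N, hNgt⟩ := exists_nat_gt (2/ε)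
  have hN2 : (0:ℝ) < 2/ε := by positivity
  have hN1 : 1 ≤ N := by
    by_contra h
    have : N = 0 := by omega
    subst this; simp at hNgt; linarith
  have hNr : (0:ℝ) < N := by exact_mod_cast hN1
  have hNineq : 1/(N:ℝ) < ε/2 := by
    rw [div_lt_div_iff₀ hNr (by norm_num : (0:ℝ) < 2)]
    nlinarith [(div_lt_iff₀ hε).mp hNgt]
  obtain ⟨K, hK⟩ := (Metric.tendsto_atTop.mp (tendsto_Dd_inv N)) (ε/4) (by positivity)
  refine ⟨max K N, fun k hk => ?_⟩
  have hkK : K ≤ k := le_trans (le_max_left _ _) hk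
  have hkN : N ≤ k := le_trans (le_max_right _ _) hk
  have hinv : (Dd N k)⁻¹ < ε/4 := by
    have := hK k hkK
    rwa [Real.dist_eq, sub_zero, abs_of_nonneg (inv_nonneg.mpr (Dd_pos N k).le)] at this
  have hinv_nonneg : 0 ≤ (Dd N k)⁻¹ := inv_nonneg.mpr (Dd_pos N k).le
  have hinv_le_one : (Dd N k)⁻¹ ≤ 1 := by
    rw [inv_le_one_iff₀]; right; exact Dd_one_le N k
  have hsq : ((Dd N k)⁻¹)^2 ≤ (Dd N k)⁻¹ := by nlinarith
  have hb := Ek_bound hN1 hkN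
  rw [Real.dist_eq, sub_zero, abs_of_nonneg (Ek_nonneg k)]
  calc Ek k ≤ 2 * ((Dd N k)⁻¹)^2 + 1/(N:ℝ) := hb
    _ < 2 * (ε/4) + ε/2 := by nlinarith
    _ = ε := by ring

lemma Dd_self (k : ℕ) : Dd k k = 1 := by
  simp [Dd, Htail, Finset.Icc_eq_empty (by omega : ¬ k+1 ≤ k)]

lemma telescope_sum (k : ℕ) :
    ∑ b ∈ Icc 1 k, ((Dd b k)⁻¹ - (Dd (b-1) k)⁻¹) = 1 - (Dd 0 k)⁻¹ := by
  rw [← Finset.Ico_add_one_right_eq_Icc, Finset.sum_Ico_eq_sum_range]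
  have h := Finset.sum_range_sub (f := fun i => (Dd i k)⁻¹) k
  simp only [Dd_self k, inv_one] at h
  simp only [Nat.add_sub_cancel]
  rw [← h]
  apply Finset.sum_congr rfl
  intro i _
  have h1 : 1 + i - 1 = i := by omega
  have h2 : 1 + i = i + 1 := by omega
  rw [h1, h2]

lemma Pk_bounds (k : ℕ) : 1 - (Dd 0 k)⁻¹ ≤ Pk k ∧ Pk k ≤ 1 - (Dd 0 k)⁻¹ + Ek k := by
  have key : ∀ b ∈ Icc 1 k,
      ((Dd b k)⁻¹ - (Dd (b-1) k)⁻¹ ≤ (1/(b:ℝ)) / (Dd b k)^2) ∧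
      ((1/(b:ℝ)) / (Dd b k)^2 ≤ ((Dd b k)⁻¹ - (Dd (b-1) k)⁻¹) + (1/(b:ℝ)^2) / (Dd b k)^2) := by
    intro b hb
    obtain ⟨hb1, hbk⟩ := Finset.mem_Icc.mp hb
    have hbp : (0:ℝ) < b := by exact_mod_cast hb1
    have hd := Dd_pos b k
    have hd1 := Dd_one_le b k
    have he := Dd_pred hb1 hbk
    have hep : 0 < Dd (b-1) k := Dd_pos _ k
    have heq : (Dd b k)⁻¹ - (Dd (b-1) k)⁻¹ = (1/(b:ℝ))/(Dd b k * Dd (b-1) k) := by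
      rw [he]
      field_simp; ring
    constructor
    · rw [heq]
      gcongr
      all_goals first | positivity | nlinarith [hd, he, one_div_nonneg.mpr hbp.le]
    · rw [heq]
      have hgoal : (1/(b:ℝ)) / (Dd b k)^2
          = (1/(b:ℝ))/(Dd b k * Dd (b-1) k) + (1/(b:ℝ)^2) / ((Dd b k)^2 * Dd (b-1) k) := by
        rw [he]
        field_simp
      rw [hgoal]
      have : (1/(b:ℝ)^2) / ((Dd b k)^2 * Dd (b-1) k) ≤ (1/(b:ℝ)^2) / (Dd b k)^2 := by
        gcongr
        all_goals first | positivity | nlinarith [Dd_one_le (b-1) k]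
      linarith
  constructor
  · rw [← telescope_sum k]
    exact Finset.sum_le_sum (fun b hb => (key b hb).1)
  · calc Pk k ≤ ∑ b ∈ Icc 1 k, (((Dd b k)⁻¹ - (Dd (b-1) k)⁻¹) + (1/(b:ℝ)^2) / (Dd b k)^2) :=
        Finset.sum_le_sum (fun b hb => (key b hb).2)
    _ = 1 - (Dd 0 k)⁻¹ + Ek k := by
        rw [Finset.sum_add_distrib, telescope_sum k]; rfl

lemma tendsto_Pk : Tendsto Pk atTop (nhds 1) := by
  have hl : Tendsto (fun k => 1 - (Dd 0 k)⁻¹) atTop (nhds 1) := by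
    simpa using (tendsto_Dd_inv 0).const_sub 1
  have hu : Tendsto (fun k => 1 - (Dd 0 k)⁻¹ + Ek k) atTop (nhds 1) := by
    simpa using hl.add tendsto_Ek
  exact tendsto_of_tendsto_of_tendsto_of_le_of_le hl hu
    (fun k => (Pk_bounds k).1) (fun k => (Pk_bounds k).2)

noncomputable def Tt (b k : ℕ) : ℝ := ∑ j ∈ Finset.Icc (b+1) k, (1:ℝ)/(j:ℝ)^2

lemma Tt_bounds {b k : ℕ} (hb : 1 ≤ b) (hk : b ≤ k) :
    Tt b k ≤ 1/(b:ℝ) - 1/(k:ℝ) ∧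
    1/(b:ℝ) - 1/(k:ℝ) - Tt b k ≤ (1/(b:ℝ)) * (1/(b:ℝ) - 1/(k:ℝ)) := by
  have hbr : (1:ℝ) ≤ (b:ℝ) := by exact_mod_cast hb
  induction k with
  | zero => omega
  | succ k ih =>
    rcases Nat.lt_or_ge b (k+1) with h | h
    · have hbk : b ≤ k := by omega
      have hkr : (1:ℝ) ≤ (k:ℝ) := le_trans hbr (by exact_mod_cast hbk)
      have hkp : (0:ℝ) < k := by linarith
      have hbkr : (b:ℝ) ≤ (k:ℝ) := by exact_mod_cast hbk
      have hstep : Tt b (k+1) = Tt b k + 1/((k:ℝ)+1)^2 := by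
        simp only [Tt]
        rw [Finset.sum_Icc_succ_top (by omega)]
        push_cast
        ring
      obtain ⟨ih1, ih2⟩ := ih hbk
      have e1 : 1/(k:ℝ) - 1/((k:ℝ)+1) = 1/((k:ℝ)*((k:ℝ)+1)) := by
        field_simp; ring
      have e2 : 1/((k:ℝ)+1)^2 ≤ 1/((k:ℝ)*((k:ℝ)+1)) := by
        apply one_div_le_one_div_of_le (by positivity)
        nlinarith
      have e3 : 1/((k:ℝ)*((k:ℝ)+1)^2) ≤ (1/(b:ℝ)) * (1/((k:ℝ)*((k:ℝ)+1))) := by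
        rw [one_div_mul_one_div]
        apply one_div_le_one_div_of_le (by positivity)
        nlinarith
      have e4 : 1/((k:ℝ)*((k:ℝ)+1)) - 1/((k:ℝ)+1)^2 = 1/((k:ℝ)*((k:ℝ)+1)^2) := by
        field_simp
        ring
      constructor
      · rw [hstep]
        push_cast
        linarith
      · rw [hstep]
        push_cast
        have e5 : (1/(b:ℝ))*(1/(b:ℝ) - 1/((k:ℝ)+1))
            = (1/(b:ℝ))*(1/(b:ℝ) - 1/(k:ℝ)) + (1/(b:ℝ))*(1/(k:ℝ) - 1/((k:ℝ)+1)) := by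
          ring
        have e6 : (1/(b:ℝ))*(1/(k:ℝ) - 1/((k:ℝ)+1)) = (1/(b:ℝ))*(1/((k:ℝ)*((k:ℝ)+1))) := by
          rw [e1]
        linarith [ih2, e1, e3, e4, e5, e6]
    · have : b = k+1 := by omega
      subst this
      have h0 : Tt (k+1) (k+1) = 0 := by
        simp [Tt, Finset.Icc_eq_empty (by omega : ¬ k+1+1 ≤ k+1)]
      rw [h0]
      constructor <;> push_cast <;> simp

noncomputable def Δk (k : ℕ) : ℝ :=
  ∑ b ∈ Icc 1 k, ((1/(b:ℝ) - 1/(k:ℝ)) - Tt b k) / (Dd b k)^2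

lemma mydiv' {a b c : ℝ} (h : a ≤ b) (hc : 0 ≤ c) : a / c ≤ b / c := by
  rw [div_eq_mul_inv, div_eq_mul_inv]
  exact mul_le_mul_of_nonneg_right h (inv_nonneg.mpr hc)

lemma Δk_bounds (k : ℕ) : 0 ≤ Δk k ∧ Δk k ≤ Ek k := by
  constructor
  · apply Finset.sum_nonneg
    intro b hb
    obtain ⟨hb1, hbk⟩ := Finset.mem_Icc.mp hb
    have := (Tt_bounds hb1 hbk).1
    apply div_nonneg (by linarith) (by positivity)
  · apply Finset.sum_le_sum
    intro b hb
    obtain ⟨hb1, hbk⟩ := Finset.mem_Icc.mp hb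
    have h2 := (Tt_bounds hb1 hbk).2
    apply mydiv' _ (by positivity)
    have hbr : (1:ℝ) ≤ (b:ℝ) := by exact_mod_cast hb1
    have hkr : (1:ℝ) ≤ (k:ℝ) := le_trans hbr (by exact_mod_cast hbk)
    have h3 : (1/(b:ℝ)) * (1/(b:ℝ) - 1/(k:ℝ)) ≤ (1/(b:ℝ)) * (1/(b:ℝ)) := by
      apply mul_le_mul_of_nonneg_left _ (by positivity)
      have : (0:ℝ) < 1/(k:ℝ) := by positivity
      linarith
    calc (1/(b:ℝ) - 1/(k:ℝ)) - Tt b k ≤ (1/(b:ℝ)) * (1/(b:ℝ) - 1/(k:ℝ)) := h2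
      _ ≤ (1/(b:ℝ)) * (1/(b:ℝ)) := h3
      _ = 1/(b:ℝ)^2 := by rw [one_div_mul_one_div]; ring

lemma tendsto_Δk : Tendsto Δk atTop (nhds 0) :=
  tendsto_of_tendsto_of_tendsto_of_le_of_le tendsto_const_nhds tendsto_Ek
    (fun k => (Δk_bounds k).1) (fun k => (Δk_bounds k).2)


noncomputable def Rk (k : ℕ) : ℝ := ∑ b ∈ Icc 1 k, (1/(k:ℝ)) / (Dd b k)^2

lemma Rk_lb {k : ℕ} (hk : 1 ≤ k) : cc ≤ Rk k := by
  refine le_trans (riemann_lb hk) ?_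
  rw [Finset.mul_sum]
  apply Finset.sum_le_sum
  intro b hb
  obtain ⟨hb1, hbk⟩ := Finset.mem_Icc.mp hb
  have hbp : (0:ℝ) < b := by exact_mod_cast hb1
  have hkp : (0:ℝ) < k := by exact_mod_cast hk
  have hlog : Real.log ((b:ℝ)/k) = Real.log b - Real.log k :=
    Real.log_div (ne_of_gt hbp) (ne_of_gt hkp)
  have hD1 : (1:ℝ) ≤ Dd b k := Dd_one_le b k
  have hD : Dd b k ≤ 1 - Real.log ((b:ℝ)/k) := by
    rw [hlog]
    have := Htail_le_log hb1 hbk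
    simp only [Dd]
    linarith
  have hFf : Ff ((b:ℝ)/k) ≤ ((Dd b k)⁻¹)^2 := by
    simp only [Ff]
    have h1 : (1 - Real.log ((b:ℝ)/k))⁻¹ ≤ (Dd b k)⁻¹ := inv_anti₀ (by linarith) hD
    have h2 : 0 ≤ (1 - Real.log ((b:ℝ)/k))⁻¹ := inv_nonneg.mpr (by linarith)
    nlinarith
  calc (1/(k:ℝ)) * Ff ((b:ℝ)/k) ≤ (1/(k:ℝ)) * ((Dd b k)⁻¹)^2 :=
        mul_le_mul_of_nonneg_left hFf (by positivity)
    _ = (1/(k:ℝ)) / (Dd b k)^2 := by ring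

lemma Rk_ub {k : ℕ} (hk : 1 ≤ k) : Rk k ≤ cc + (cc+1) * (1/(k:ℝ)) := by
  have hkp : (0:ℝ) < k := by exact_mod_cast hk
  have h1 : ∀ b ∈ Icc 1 k, (1/(k:ℝ))/(Dd b k)^2
      ≤ (1/(k:ℝ)) * Ff (((b:ℝ)+1)/((k:ℝ)+1)) := by
    intro b hb
    obtain ⟨hb1, hbk⟩ := Finset.mem_Icc.mp hb
    have hbp : (0:ℝ) < b := by exact_mod_cast hb1
    have hbkr : (b:ℝ) ≤ (k:ℝ) := by exact_mod_cast hbk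
    have hlog : Real.log (((b:ℝ)+1)/((k:ℝ)+1)) = Real.log ((b:ℝ)+1) - Real.log ((k:ℝ)+1) :=
      Real.log_div (by positivity) (by positivity)
    have hlog2 : Real.log (((b:ℝ)+1)/((k:ℝ)+1)) ≤ 0 :=
      Real.log_nonpos (by positivity) (by rw [div_le_one (by positivity)]; linarith)
    have hD : 1 - Real.log (((b:ℝ)+1)/((k:ℝ)+1)) ≤ Dd b k := by
      rw [hlog]
      have := log_le_Htail hb1 hbk
      simp only [Dd]
      push_cast at this
      linarith
    have hD0 : (1:ℝ) ≤ 1 - Real.log (((b:ℝ)+1)/((k:ℝ)+1)) := by linarith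
    have hFf : ((Dd b k)⁻¹)^2 ≤ Ff (((b:ℝ)+1)/((k:ℝ)+1)) := by
      simp only [Ff]
      have h1 : (Dd b k)⁻¹ ≤ (1 - Real.log (((b:ℝ)+1)/((k:ℝ)+1)))⁻¹ :=
        inv_anti₀ (by linarith) hD
      have h2 : 0 ≤ (Dd b k)⁻¹ := inv_nonneg.mpr (Dd_pos b k).le
      nlinarith
    calc (1/(k:ℝ))/(Dd b k)^2 = (1/(k:ℝ)) * ((Dd b k)⁻¹)^2 := by ring
      _ ≤ (1/(k:ℝ)) * Ff (((b:ℝ)+1)/((k:ℝ)+1)) :=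
          mul_le_mul_of_nonneg_left hFf (by positivity)
  have h2 : Rk k ≤ (1/(k:ℝ)) * ∑ b ∈ Icc 1 k, Ff (((b:ℝ)+1)/((k:ℝ)+1)) := by
    rw [Finset.mul_sum]
    exact Finset.sum_le_sum h1
  have h3 : ∑ b ∈ Icc 1 k, Ff (((b:ℝ)+1)/((k:ℝ)+1))
      ≤ ∑ j ∈ Icc 1 (k+1), Ff ((j:ℝ)/((k+1:ℕ):ℝ)) := by
    have hL : ∑ b ∈ Icc 1 k, Ff (((b:ℝ)+1)/((k:ℝ)+1))
        = ∑ i ∈ range k, Ff (((i:ℝ)+2)/((k:ℝ)+1)) := by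
      rw [← Finset.Ico_add_one_right_eq_Icc, Finset.sum_Ico_eq_sum_range]
      simp only [Nat.add_sub_cancel]
      apply Finset.sum_congr rfl
      intro i _
      congr 1
      push_cast
      ring
    have hR : ∑ j ∈ Icc 1 (k+1), Ff ((j:ℝ)/((k+1:ℕ):ℝ))
        = ∑ i ∈ range k, Ff (((i:ℝ)+2)/((k:ℝ)+1)) + Ff (1/((k:ℝ)+1)) := by
      rw [← Finset.Ico_add_one_right_eq_Icc, Finset.sum_Ico_eq_sum_range]
      simp only [Nat.add_sub_cancel]
      rw [Finset.sum_range_succ']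
      congr 1
      · apply Finset.sum_congr rfl
        intro i _
        congr 1
        push_cast
        ring
      · congr 1
        push_cast
        ring
    rw [hL, hR]
    exact le_add_of_nonneg_right (Ff_nonneg _)
  have h4 : ∑ j ∈ Icc 1 (k+1), Ff ((j:ℝ)/((k+1:ℕ):ℝ)) ≤ ((k:ℝ)+1)*cc + 1 := by
    have h := riemann_ub (n := k+1) (by omega)
    have hk1 : (0:ℝ) < ((k+1:ℕ):ℝ) := by positivity
    have h' := mul_le_mul_of_nonneg_left h hk1.le
    have e1 : ((k+1:ℕ):ℝ) * ((1/((k+1:ℕ):ℝ)) * ∑ j ∈ Icc 1 (k+1), Ff ((j:ℝ)/((k+1:ℕ):ℝ)))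
        = ∑ j ∈ Icc 1 (k+1), Ff ((j:ℝ)/((k+1:ℕ):ℝ)) := by
      field_simp
    have e2 : ((k+1:ℕ):ℝ) * (cc + 1/((k+1:ℕ):ℝ)) = ((k+1:ℕ):ℝ)*cc + 1 := by
      field_simp
    rw [e1, e2] at h'
    push_cast at h' ⊢
    linarith
  calc Rk k ≤ (1/(k:ℝ)) * ∑ b ∈ Icc 1 k, Ff (((b:ℝ)+1)/((k:ℝ)+1)) := h2
    _ ≤ (1/(k:ℝ)) * (((k:ℝ)+1)*cc + 1) := by
        apply mul_le_mul_of_nonneg_left (le_trans h3 h4) (by positivity)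
    _ = cc + (cc+1) * (1/(k:ℝ)) := by field_simp; ring

lemma tendsto_Rk : Tendsto Rk atTop (nhds cc) := by
  have hu : Tendsto (fun k : ℕ => cc + (cc+1) * (1/(k:ℝ))) atTop (nhds cc) := by
    have h0 : Tendsto (fun k : ℕ => (cc+1) * (1/(k:ℝ))) atTop (nhds 0) := by
      simpa using (tendsto_one_div_atTop_nhds_zero_nat).const_mul (cc+1)
    simpa using tendsto_const_nhds.add h0
  refine tendsto_of_tendsto_of_tendsto_of_le_of_le' tendsto_const_nhds hu ?_ ?_
  · filter_upwards [eventually_ge_atTop 1] with k hk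
    exact Rk_lb hk
  · filter_upwards [eventually_ge_atTop 1] with k hk
    exact Rk_ub hk


lemma sum_decomp (k : ℕ) :
    ∑ b ∈ Finset.Icc 1 k,
      ((1 : ℝ) / (b : ℝ) + ∑ j ∈ Finset.Icc (b + 1) k, (1 : ℝ) / (j : ℝ) ^ 2)
        / (1 + Htail b k) ^ 2
    = 2 * Pk k - Rk k - Δk k := by
  rw [Pk, Rk, Δk, Finset.mul_sum, ← Finset.sum_sub_distrib, ← Finset.sum_sub_distrib]
  apply Finset.sum_congr rfl
  intro b _
  show ((1 : ℝ) / (b : ℝ) + Tt b k) / (Dd b k) ^ 2 = _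
  ring

theorem limit_variance_coefficient :
    Filter.Tendsto
      (fun k : ℕ => ∑ b ∈ Finset.Icc 1 k,
        ((1 : ℝ) / (b : ℝ) + ∑ j ∈ Finset.Icc (b + 1) k, (1 : ℝ) / (j : ℝ) ^ 2)
          / (1 + Htail b k) ^ 2)
      Filter.atTop (nhds (1 + Real.exp 1 * Ei 1)) := by
  have h : Tendsto (fun k => 2 * Pk k - Rk k - Δk k) atTop (nhds (2 * 1 - cc - 0)) :=
    ((tendsto_Pk.const_mul 2).sub tendsto_Rk).sub tendsto_Δk
  have he : 2 * 1 - cc - 0 = 1 + Real.exp 1 * Ei 1 := by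
    rw [cc_eq]; ring
  rw [he] at h
  exact h.congr (fun k => (sum_decomp k).symm)
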